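/- Let K = [-β₁, β₂] ⊂ ℝ with β₁, β₂ > 0, and let A ∈ ℝ^{n×n}, B ∈ ℝ^{n×m} with rank(A) = n and rank(B) = n. Then the linear span of the functions β ↦ β^k A^k b_j (for j = 1,…,m, k = 0,1,2,…, where b_j is the j-th column of B) is dense in C(K, ℝ^n) with the uniform norm. -/

import Mathlib

open Matrix Polynomial

lemma surj_of_rank_eq {n p : ℕ} (M : Matrix (Fin n) (Fin p) ℝ) (h : M.rank = n) :
    Function.Surjective M.mulVec := by
  have hrange : LinearMap.range M.mulVecLin = ⊤ := by
    apply Submodule.eq_top_of_finrank_eq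
    rw [← Matrix.rank, h, Module.finrank_pi]
    simp
  intro v
  have hv : v ∈ LinearMap.range M.mulVecLin := hrange ▸ Submodule.mem_top
  obtain ⟨u, hu⟩ := hv
  exact ⟨u, hu⟩

lemma sum_smul_col {n m : ℕ} (M : Matrix (Fin n) (Fin m) ℝ) (γ : Fin m → ℝ) :
    ∑ j : Fin m, γ j • (fun i => M i j) = M.mulVec γ := by
  ext i
  simp [Matrix.mulVec, dotProduct, Finset.sum_apply, mul_comm]

theorem stmt1 (n m : ℕ) (β₁ β₂ : ℝ) (hβ₁ : 0 < β₁) (hβ₂ : 0 < β₂)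
    (A : Matrix (Fin n) (Fin n) ℝ) (B : Matrix (Fin n) (Fin m) ℝ)
    (hA : A.rank = n) (hB : B.rank = n)
    (ξ : ℝ → Fin n → ℝ) (hξ : ContinuousOn ξ (Set.Icc (-β₁) β₂)) (ε : ℝ) (hε : 0 < ε) :
    ∃ (N : ℕ) (α : Fin m → ℕ → ℝ), ∀ β ∈ Set.Icc (-β₁) β₂,
      ‖ξ β - ∑ k ∈ Finset.range N, ∑ j : Fin m,
        α j k • (β ^ k • (A ^ k).mulVec fun i => B i j)‖ < ε := by
  have hAsurj : Function.Surjective A.mulVec := surj_of_rank_eq A hA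
  have hBsurj : Function.Surjective B.mulVec := surj_of_rank_eq B hB
  have hk : ∀ k : ℕ, Function.Surjective ((A ^ k) * B).mulVec := by
    intro k
    have hAk : Function.Surjective (A ^ k).mulVec := by
      induction k with
      | zero => intro v; exact ⟨v, by simp [pow_zero, Matrix.one_mulVec]⟩
      | succ k ih =>
        intro v
        obtain ⟨w, hw⟩ := hAsurj v
        obtain ⟨u, hu⟩ := ih w
        refine ⟨u, ?_⟩
        rw [pow_succ', ← Matrix.mulVec_mulVec, hu, hw]
    intro v
    obtain ⟨w, hw⟩ := hAk v
    obtain ⟨u, hu⟩ := hBsurj w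
    exact ⟨u, by rw [← Matrix.mulVec_mulVec, hu, hw]⟩
  -- approximate each coordinate by a polynomial
  have hcoord : ∀ i : Fin n, ∃ p : ℝ[X], ∀ x ∈ Set.Icc (-β₁) β₂,
      |p.eval x - ξ x i| < ε := by
    intro i
    apply exists_polynomial_near_of_continuousOn
    · exact (continuous_apply i).comp_continuousOn hξ
    · exact hε
  choose p hp using hcoord
  set N : ℕ := (Finset.univ.sup fun i : Fin n => (p i).natDegree) + 1 with hN
  set c : ℕ → Fin n → ℝ := fun k i => (p i).coeff k with hc
  have hγ : ∀ k : ℕ, ∃ γ : Fin m → ℝ, ((A ^ k) * B).mulVec γ = c k := fun k => hk k (c k)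
  choose γ hγeq using hγ
  refine ⟨N, fun j k => γ k j, ?_⟩
  intro β hβ
  -- simplify the inner double sum
  have key : (∑ k ∈ Finset.range N, ∑ j : Fin m,
      (γ k j) • (β ^ k • (A ^ k).mulVec fun i => B i j)) = fun i => (p i).eval β := by
    have inner : ∀ k : ℕ, (∑ j : Fin m, (γ k j) • (β ^ k • (A ^ k).mulVec fun i => B i j))
        = β ^ k • c k := by
      intro k
      have h1 : ∀ j : Fin m, (γ k j) • (β ^ k • (A ^ k).mulVec fun i => B i j)
          = β ^ k • ((γ k j) • (A ^ k).mulVec fun i => B i j) := fun j => smul_comm _ _ _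
      rw [Finset.sum_congr rfl fun j _ => h1 j, ← Finset.smul_sum]
      congr 1
      have h2 : (∑ j : Fin m, (γ k j) • (A ^ k).mulVec fun i => B i j)
          = (A ^ k).mulVec (∑ j : Fin m, (γ k j) • fun i => B i j) := by
        have h3 := map_sum (A ^ k).mulVecLin (fun j => (γ k j) • fun i => B i j) Finset.univ
        simp only [Matrix.mulVecLin_apply] at h3
        rw [h3]
        simp [Matrix.mulVec_smul]
      rw [h2, sum_smul_col, Matrix.mulVec_mulVec, hγeq]
    rw [Finset.sum_congr rfl fun k _ => inner k]
    ext i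
    have hdeg : (p i).natDegree < N := by
      rw [hN]
      exact Nat.lt_succ_of_le (Finset.le_sup (f := fun i => (p i).natDegree) (Finset.mem_univ i))
    rw [Polynomial.eval_eq_sum_range' hdeg]
    simp only [Finset.sum_apply, Pi.smul_apply, smul_eq_mul, mul_comm]
    rfl
  rw [key]
  rw [pi_norm_lt_iff hε]
  intro i
  simp only [Pi.sub_apply, Real.norm_eq_abs]
  rw [abs_sub_comm]
  exact hp i β hβ
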